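/- Let Ω be a nonempty closed subset of ℝ, let σ be a finite positive semidefinite q×q matrix measure on Ω, and define S(w) = ∫_Ω 1/(t-w) dσ(t) for w ∈ ℂ \ Ω. Then for every z ∈ ℂ \ [inf Ω, sup Ω], the column space (range) of S(z) equals the column space of the matrix σ(Ω); in particular rank S(z) = rank σ(Ω). -/

import Mathlib

open Matrix Complex MeasureTheory Filter
open scoped ComplexOrder ComplexInnerProductSpace

/-- The "imaginary part" of a complex square matrix: `Im M = (M - M*)/(2i)`. -/
noncomputable def mIm {q : ℕ} (M : Matrix (Fin q) (Fin q) ℂ) : Matrix (Fin q) (Fin q) ℂ :=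
  ((2 : ℂ) * Complex.I)⁻¹ • (M - Mᴴ)

/-- The "real part" of a complex square matrix: `Re M = (M + M*)/2`. -/
noncomputable def mRe {q : ℕ} (M : Matrix (Fin q) (Fin q) ℂ) : Matrix (Fin q) (Fin q) ℂ :=
  ((2 : ℂ))⁻¹ • (M + Mᴴ)

section Helpers

/-- In finite dimensions, the range of a linear endomorphism is the orthogonal
complement of the kernel of its adjoint. -/
lemma range_eq_orthogonal_ker_adjoint {E : Type*} [NormedAddCommGroup E]
    [InnerProductSpace ℂ E] [FiniteDimensional ℂ E] (T : E →ₗ[ℂ] E) :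
    LinearMap.range T = (LinearMap.ker (LinearMap.adjoint T))ᗮ := by
  rw [← Submodule.orthogonal_orthogonal (LinearMap.range T)]
  congr 1
  ext v
  simp only [Submodule.mem_orthogonal, LinearMap.mem_ker, LinearMap.mem_range,
    forall_exists_index, forall_apply_eq_imp_iff]
  constructor
  · intro h
    have h2 : ⟪LinearMap.adjoint T v, LinearMap.adjoint T v⟫ = 0 := by
      rw [LinearMap.adjoint_inner_left]
      have h3 := h (LinearMap.adjoint T v)
      have := congrArg (starRingEnd ℂ) h3
      rwa [inner_conj_symm, map_zero] at this
    exact inner_self_eq_zero.mp h2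
  · intro h x
    rw [← LinearMap.adjoint_inner_right, h, inner_zero_right]

lemma euclid_comp {q : ℕ} (A : Matrix (Fin q) (Fin q) ℂ) :
    Matrix.toEuclideanLin A =
      ((WithLp.linearEquiv 2 ℂ (Fin q → ℂ)).symm.toLinearMap.comp
        (A.mulVecLin.comp (WithLp.linearEquiv 2 ℂ (Fin q → ℂ)).toLinearMap)) :=
  LinearMap.ext fun x => rfl

/-- If two square complex matrices have conjugate-transposes with the same kernel,
then they have the same range. -/
lemma range_mulVecLin_eq_of_ker {q : ℕ} {M N : Matrix (Fin q) (Fin q) ℂ}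
    (h : LinearMap.ker Mᴴ.mulVecLin = LinearMap.ker Nᴴ.mulVecLin) :
    LinearMap.range M.mulVecLin = LinearMap.range N.mulVecLin := by
  set e := WithLp.linearEquiv 2 ℂ (Fin q → ℂ) with he
  have hr : ∀ A : Matrix (Fin q) (Fin q) ℂ, LinearMap.range A.mulVecLin
      = Submodule.map e.toLinearMap (LinearMap.range (Matrix.toEuclideanLin A)) := by
    intro A
    have h1 : A.mulVecLin =
        e.toLinearMap.comp ((Matrix.toEuclideanLin A).comp e.symm.toLinearMap) :=
      LinearMap.ext fun x => rfl
    rw [h1, LinearMap.range_comp, LinearMap.range_comp, LinearEquiv.range, Submodule.map_top]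
  have hk : ∀ A : Matrix (Fin q) (Fin q) ℂ, LinearMap.ker (Matrix.toEuclideanLin A)
      = Submodule.comap e.toLinearMap (LinearMap.ker A.mulVecLin) := by
    intro A
    have h1 : Matrix.toEuclideanLin A =
        (e.symm.toLinearMap.comp A.mulVecLin).comp e.toLinearMap :=
      LinearMap.ext fun x => rfl
    rw [h1, LinearMap.ker_comp, LinearMap.ker_comp, LinearEquiv.ker, Submodule.comap_bot]
  rw [hr M, hr N, range_eq_orthogonal_ker_adjoint, range_eq_orthogonal_ker_adjoint,
    ← Matrix.toEuclideanLin_conjTranspose_eq_adjoint,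
    ← Matrix.toEuclideanLin_conjTranspose_eq_adjoint, hk, hk, h]

/-- Main analytic lemma: for a positive weight `φ`, the kernel of the matrix
`∫ φ t • d t` is characterized by `d t *ᵥ v = 0` a.e. -/
lemma aux_ker {q : ℕ} (τ : Measure ℝ)
    (d : ℝ → Matrix (Fin q) (Fin q) ℂ)
    (hdpsd : ∀ t, (d t).PosSemidef)
    (φ : ℝ → ℂ)
    (hφint : ∀ j k, Integrable (fun t => φ t * d t j k) τ)
    (hφpos : ∀ᵐ t ∂τ, 0 < (φ t).re)
    (v : Fin q → ℂ) :
    (Matrix.of fun j k => ∫ t, φ t * d t j k ∂τ) *ᵥ v = 0 ↔ ∀ᵐ t ∂τ, d t *ᵥ v = 0 := by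
  have int_dv : ∀ j, Integrable (fun t => φ t * (d t *ᵥ v) j) τ := by
    intro j
    have h1 : (fun t => φ t * (d t *ᵥ v) j) = fun t => ∑ k, (φ t * d t j k) * v k := by
      funext t
      simp [Matrix.mulVec, dotProduct, Finset.mul_sum, mul_assoc]
    rw [h1]
    exact integrable_finset_sum _ fun k _ => (hφint j k).mul_const _
  have hBv : (Matrix.of fun j k => ∫ t, φ t * d t j k ∂τ) *ᵥ v
      = fun j => ∫ t, φ t * (d t *ᵥ v) j ∂τ := by
    funext j
    have h2 : ∫ t, φ t * (d t *ᵥ v) j ∂τ = ∑ k, (∫ t, φ t * d t j k ∂τ) * v k := by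
      calc ∫ t, φ t * (d t *ᵥ v) j ∂τ = ∫ t, ∑ k, (φ t * d t j k) * v k ∂τ := by
            congr 1; funext t
            simp [Matrix.mulVec, dotProduct, Finset.mul_sum, mul_assoc]
        _ = ∑ k, ∫ t, (φ t * d t j k) * v k ∂τ :=
            integral_finset_sum _ fun k _ => (hφint j k).mul_const _
        _ = ∑ k, (∫ t, φ t * d t j k ∂τ) * v k := by
            simp [integral_mul_const]
    show _ = ∫ t, φ t * (d t *ᵥ v) j ∂τ
    rw [h2]
    simp [Matrix.mulVec, dotProduct]
  constructor
  · intro hB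
    set f : ℝ → ℂ := fun t => star v ⬝ᵥ (d t *ᵥ v) with hf
    have hf_nonneg : ∀ t, 0 ≤ f t := fun t => (hdpsd t).dotProduct_mulVec_nonneg v
    have hf_im : ∀ t, (f t).im = 0 := fun t => (Complex.nonneg_iff.mp (hf_nonneg t)).2.symm
    have hf_re : ∀ t, 0 ≤ (f t).re := fun t => (Complex.nonneg_iff.mp (hf_nonneg t)).1
    have hsum : ∀ t, φ t * f t = ∑ j, star (v j) * (φ t * (d t *ᵥ v) j) := by
      intro t
      simp [hf, dotProduct, Finset.mul_sum, mul_left_comm]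
    have int_f : Integrable (fun t => φ t * f t) τ := by
      have h1 : (fun t => φ t * f t) = fun t => ∑ j, star (v j) * (φ t * (d t *ᵥ v) j) := by
        funext t; exact hsum t
      rw [h1]
      exact integrable_finset_sum _ fun j _ => ((int_dv j).const_mul _)
    have hint0 : ∫ t, φ t * f t ∂τ = 0 := by
      have h1 : star v ⬝ᵥ ((Matrix.of fun j k => ∫ t, φ t * d t j k ∂τ) *ᵥ v) = 0 := by
        rw [hB, dotProduct_zero]
      rw [hBv] at h1
      calc ∫ t, φ t * f t ∂τ
          = ∫ t, ∑ j, star (v j) * (φ t * (d t *ᵥ v) j) ∂τ := by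
            congr 1; funext t; exact hsum t
        _ = ∑ j, ∫ t, star (v j) * (φ t * (d t *ᵥ v) j) ∂τ :=
            integral_finset_sum _ fun j _ => (int_dv j).const_mul _
        _ = ∑ j, star (v j) * ∫ t, φ t * (d t *ᵥ v) j ∂τ := by
            simp [integral_const_mul]
        _ = 0 := h1
    have hre_eq : ∀ t, (φ t).re * (f t).re = (φ t * f t).re := by
      intro t
      rw [Complex.mul_re, hf_im t]
      ring
    have hre0 : ∫ t, (φ t).re * (f t).re ∂τ = 0 := by
      calc ∫ t, (φ t).re * (f t).re ∂τ = ∫ t, (φ t * f t).re ∂τ := by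
            congr 1; funext t; exact hre_eq t
        _ = (∫ t, φ t * f t ∂τ).re := by
            simpa using integral_re (𝕜 := ℂ) int_f
        _ = 0 := by rw [hint0]; rfl
    have hnn : 0 ≤ᵐ[τ] fun t => (φ t).re * (f t).re := by
      filter_upwards [hφpos] with t ht
      exact mul_nonneg ht.le (hf_re t)
    have hint_re : Integrable (fun t => (φ t).re * (f t).re) τ := by
      have h1 := int_f.re
      simp only [RCLike.re_to_complex] at h1
      have h2 : (fun t => (φ t).re * (f t).re) = fun t => (φ t * f t).re := by
        funext t; exact hre_eq t
      rwa [h2]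
    have hae := (integral_eq_zero_iff_of_nonneg_ae hnn hint_re).mp hre0
    filter_upwards [hae, hφpos] with t h1 h2
    have hf0 : (f t).re = 0 := by
      have h1' : (φ t).re * (f t).re = 0 := h1
      rcases mul_eq_zero.mp h1' with h | h
      · exact absurd h (ne_of_gt h2)
      · exact h
    have hft : f t = 0 := Complex.ext (by simpa using hf0) (by simpa using hf_im t)
    exact ((hdpsd t).dotProduct_mulVec_zero_iff v).mp hft
  · intro hae
    rw [hBv]
    funext j
    have : ∫ t, φ t * (d t *ᵥ v) j ∂τ = 0 := by
      rw [← integral_zero ℝ ℂ]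
      apply integral_congr_ae
      filter_upwards [hae] with t ht
      rw [ht]
      simp
    simpa using this

/-- Choice of a rotation `c` making `c/(t-z)` have positive real part on `Ω`. -/
lemma exists_c (Ω : Set ℝ) (z : ℂ)
    (hz : z.im ≠ 0 ∨ (∀ t ∈ Ω, z.re < t) ∨ (∀ t ∈ Ω, t < z.re)) :
    ∃ c : ℂ, c ≠ 0 ∧ ∀ t ∈ Ω, 0 < (c * ((t : ℂ) - z)⁻¹).re := by
  have key : ∀ (c : ℂ) (t : ℝ), ((t : ℂ) - z) ≠ 0 → 0 < (c * ((starRingEnd ℂ) ((t : ℂ) - z))).re →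
      0 < (c * ((t : ℂ) - z)⁻¹).re := by
    intro c t hne hpos
    rw [Complex.inv_def, ← mul_assoc]
    have h1 : (0:ℝ) < (Complex.normSq ((t : ℂ) - z))⁻¹ :=
      inv_pos.mpr (Complex.normSq_pos.mpr hne)
    rw [show (c * ((starRingEnd ℂ) ((t:ℂ) - z)) * (((Complex.normSq ((t:ℂ) - z))⁻¹ : ℝ) : ℂ)).re
        = (c * ((starRingEnd ℂ) ((t:ℂ) - z))).re * (Complex.normSq ((t:ℂ) - z))⁻¹ by
      rw [Complex.mul_re, Complex.ofReal_re, Complex.ofReal_im]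
      ring]
    exact mul_pos hpos h1
  rcases hz with him | hlt | hgt
  · rcases lt_or_gt_of_ne him with hneg | hpos
    · refine ⟨Complex.I, Complex.I_ne_zero, fun t ht => ?_⟩
      apply key
      · intro h
        have := congrArg Complex.im h
        simp at this
        exact him (by linarith)
      · simp [Complex.mul_re, Complex.conj_re, Complex.conj_im, Complex.sub_re,
          Complex.sub_im, Complex.ofReal_re, Complex.ofReal_im]
        linarith
    · refine ⟨-Complex.I, by simp [Complex.I_ne_zero], fun t ht => ?_⟩
      apply key
      · intro h
        have := congrArg Complex.im h
        simp at this
        exact him (by linarith)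
      · simp [Complex.mul_re, Complex.conj_re, Complex.conj_im, Complex.sub_re,
          Complex.sub_im, Complex.ofReal_re, Complex.ofReal_im]
        linarith
  · refine ⟨1, one_ne_zero, fun t ht => ?_⟩
    have h1 : z.re < t := hlt t ht
    apply key
    · intro h
      have := congrArg Complex.re h
      simp at this
      linarith
    · simp [Complex.mul_re, Complex.conj_re, Complex.conj_im, Complex.sub_re,
        Complex.sub_im, Complex.ofReal_re, Complex.ofReal_im]
      linarith
  · refine ⟨-1, by norm_num, fun t ht => ?_⟩
    have h1 : (t:ℝ) < z.re := hgt t ht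
    apply key
    · intro h
      have := congrArg Complex.re h
      simp at this
      linarith
    · simp [Complex.mul_re, Complex.conj_re, Complex.conj_im, Complex.sub_re,
        Complex.sub_im, Complex.ofReal_re, Complex.ofReal_im]
      linarith

lemma not_mem_image (Ω : Set ℝ) (z : ℂ)
    (hz : z.im ≠ 0 ∨ (∀ t ∈ Ω, z.re < t) ∨ (∀ t ∈ Ω, t < z.re)) :
    z ∉ (fun t : ℝ => (t : ℂ)) '' Ω := by
  rintro ⟨t, ht, rfl⟩
  rcases hz with him | hlt | hgt
  · exact him (by simp)
  · have := hlt t ht; simp at this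
  · have := hgt t ht; simp at this

lemma exists_bound (Ω : Set ℝ) (hΩc : IsClosed Ω) (z : ℂ)
    (hz : z ∉ (fun t : ℝ => (t : ℂ)) '' Ω) :
    ∃ C : ℝ, ∀ t ∈ Ω, ‖((t : ℂ) - z)⁻¹‖ ≤ C := by
  rcases Ω.eq_empty_or_nonempty with rfl | hne
  · exact ⟨0, fun t ht => absurd ht (Set.notMem_empty t)⟩
  · have himc : IsClosed ((fun t : ℝ => (t : ℂ)) '' Ω) :=
      (Complex.isometry_ofReal.isClosedEmbedding.isClosedMap) Ω hΩc
    have himne : ((fun t : ℝ => (t : ℂ)) '' Ω).Nonempty := hne.image _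
    have hpos : 0 < Metric.infDist z ((fun t : ℝ => (t : ℂ)) '' Ω) :=
      (himc.notMem_iff_infDist_pos himne).mp hz
    refine ⟨(Metric.infDist z ((fun t : ℝ => (t : ℂ)) '' Ω))⁻¹, fun t ht => ?_⟩
    rw [norm_inv]
    apply inv_anti₀ hpos
    calc Metric.infDist z ((fun t : ℝ => (t : ℂ)) '' Ω) ≤ dist z ((t : ℝ) : ℂ) :=
          Metric.infDist_le_dist_of_mem ⟨t, ht, rfl⟩
      _ = ‖(t : ℂ) - z‖ := by rw [dist_eq_norm, norm_sub_rev]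

end Helpers

theorem stmt5 {q : ℕ} (Ω : Set ℝ) (hΩc : IsClosed Ω) (hΩne : Ω.Nonempty)
    (τ : Measure ℝ) [IsFiniteMeasure τ] (hτ : τ Ωᶜ = 0)
    (d : ℝ → Matrix (Fin q) (Fin q) ℂ)
    (hdmeas : ∀ j k : Fin q, Measurable fun t => d t j k)
    (hdpsd : ∀ t, (d t).PosSemidef)
    (hdint : ∀ j k, Integrable (fun t => d t j k) τ)
    (S : ℂ → Matrix (Fin q) (Fin q) ℂ)
    (hS : ∀ w : ℂ, w ∉ (fun t : ℝ => (t : ℂ)) '' Ω →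
      S w = Matrix.of fun j k => ∫ t, ((t : ℂ) - w)⁻¹ * d t j k ∂τ) :
    ∀ z : ℂ, (z.im ≠ 0 ∨ (∀ t ∈ Ω, z.re < t) ∨ (∀ t ∈ Ω, t < z.re)) →
      LinearMap.range (S z).mulVecLin =
        LinearMap.range (Matrix.of fun j k => ∫ t, d t j k ∂τ).mulVecLin
      ∧ (S z).rank = (Matrix.of fun j k => ∫ t, d t j k ∂τ : Matrix (Fin q) (Fin q) ℂ).rank := by
  intro z hz
  set A : Matrix (Fin q) (Fin q) ℂ := Matrix.of fun j k => ∫ t, d t j k ∂τ with hA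
  have hae_mem : ∀ᵐ t ∂τ, t ∈ Ω := by
    rw [ae_iff]
    exact hτ
  -- kernel of A equals a.e. kernel
  have hkerA : ∀ v : Fin q → ℂ, A *ᵥ v = 0 ↔ ∀ᵐ t ∂τ, d t *ᵥ v = 0 := by
    intro v
    have h1 : A = Matrix.of fun j k => ∫ t, (1 : ℂ) * d t j k ∂τ := by
      ext j k; simp [hA]
    rw [h1]
    exact aux_ker τ d hdpsd 1 (fun j k => by simpa using hdint j k)
      (Eventually.of_forall fun t => by norm_num) v
  -- kernel of S w for any admissible w
  have hkerS : ∀ w : ℂ, (w.im ≠ 0 ∨ (∀ t ∈ Ω, w.re < t) ∨ (∀ t ∈ Ω, t < w.re)) →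
      ∀ v : Fin q → ℂ, S w *ᵥ v = 0 ↔ ∀ᵐ t ∂τ, d t *ᵥ v = 0 := by
    intro w hw v
    obtain ⟨c, hc0, hcpos⟩ := exists_c Ω w hw
    have hnm := not_mem_image Ω w hw
    obtain ⟨C, hC⟩ := exists_bound Ω hΩc w hnm
    have hgmeas : Measurable fun t : ℝ => ((t : ℂ) - w)⁻¹ :=
      ((Complex.measurable_ofReal.sub measurable_const).inv)
    have hgint : ∀ j k, Integrable (fun t : ℝ => ((t : ℂ) - w)⁻¹ * d t j k) τ := by
      intro j k
      apply Integrable.bdd_mul (hdint j k) hgmeas.aestronglyMeasurable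
      filter_upwards [hae_mem] with t ht
      exact hC t ht
    have hcint : ∀ j k, Integrable (fun t : ℝ => (c * ((t : ℂ) - w)⁻¹) * d t j k) τ := by
      intro j k
      have := (hgint j k).const_mul c
      simpa [mul_assoc] using this
    have hSw : S w = Matrix.of fun j k => ∫ t, ((t : ℂ) - w)⁻¹ * d t j k ∂τ := hS w hnm
    have hsmul : Matrix.of (fun j k => ∫ t, (c * ((t : ℂ) - w)⁻¹) * d t j k ∂τ)
        = c • S w := by
      rw [hSw]
      ext j k
      simp only [Matrix.of_apply, Matrix.smul_apply, smul_eq_mul]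
      rw [← integral_const_mul]
      congr 1; funext t; ring
    have key := aux_ker τ d hdpsd (fun t => c * ((t : ℂ) - w)⁻¹) hcint
      (by filter_upwards [hae_mem] with t ht; exact hcpos t ht) v
    rw [hsmul] at key
    rw [← key]
    constructor
    · intro h
      rw [Matrix.smul_mulVec, h, smul_zero]
    · intro h
      rw [Matrix.smul_mulVec] at h
      exact (smul_eq_zero_iff_right hc0).mp h
  -- A is Hermitian
  have hAherm : Aᴴ = A := by
    ext j k
    simp only [Matrix.conjTranspose_apply, hA, Matrix.of_apply]
    rw [star_def, ← integral_conj]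
    congr 1; funext t
    exact (hdpsd t).1.apply j k
  -- (S z)ᴴ = S (conj z)
  have hzbar : ((starRingEnd ℂ) z).im ≠ 0 ∨ (∀ t ∈ Ω, ((starRingEnd ℂ) z).re < t)
      ∨ (∀ t ∈ Ω, t < ((starRingEnd ℂ) z).re) := by
    rcases hz with him | h | h
    · left; simpa using him
    · right; left; simpa using h
    · right; right; simpa using h
  have hSconj : (S z)ᴴ = S ((starRingEnd ℂ) z) := by
    rw [hS z (not_mem_image Ω z hz), hS _ (not_mem_image Ω _ hzbar)]
    ext j k
    simp only [Matrix.conjTranspose_apply, Matrix.of_apply]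
    rw [star_def, ← integral_conj]
    congr 1; funext t
    rw [_root_.map_mul, map_inv₀, map_sub, Complex.conj_ofReal]
    congr 1
    exact (hdpsd t).1.apply j k
  -- kernels of conjugate transposes agree
  have hkerCT : LinearMap.ker (S z)ᴴ.mulVecLin = LinearMap.ker Aᴴ.mulVecLin := by
    rw [hSconj, hAherm]
    ext v
    simp only [LinearMap.mem_ker, Matrix.mulVecLin_apply]
    rw [hkerS _ hzbar v, hkerA v]
  have hrange : LinearMap.range (S z).mulVecLin = LinearMap.range A.mulVecLin :=
    range_mulVecLin_eq_of_ker hkerCT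
  exact ⟨hrange, by rw [Matrix.rank, Matrix.rank, hrange]⟩
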